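/- Let E be an equidistant linear code over 𝔽_q of length n and dimension k ≥ 1. Then there exist integers ℓ ≥ 1 and u ≥ 0 such that n = ℓ·(q^k−1)/(q−1) + u, and E is monomially equivalent to the code generated by the k × n matrix [H_k | H_k | ⋯ | H_k | 0] obtained by concatenating ℓ copies of a parity check matrix H_k of the q-ary Hamming code of length (q^k−1)/(q−1) and appending u zero columns. -/

import Mathlib

open Finset

variable {F : Type*} [Field F] [Fintype F] [DecidableEq F]

/-- The Hamming distance from a vector to a code. -/
noncomputable def distToCode {ι : Type*} [Fintype ι] (C : Set (ι → F)) (x : ι → F) : ℕ :=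
  sInf {d : ℕ | ∃ c ∈ C, hammingDist x c = d}

/-- The covering radius of a code: the maximal distance of a vector to the code. -/
noncomputable def coveringRadius {ι : Type*} [Fintype ι] (C : Set (ι → F)) : ℕ :=
  sSup {d : ℕ | ∃ x : ι → F, distToCode C x = d}

/-- `C` has intersection numbers `b l` (number of neighbours one step further from the code)
and `c l` (number of neighbours one step closer to the code), for every `x` at distance `l`. -/
def HasIntersectionNumbers {ι : Type*} [Fintype ι] (C : Set (ι → F)) (b c : ℕ → ℕ) : Prop :=
  ∀ l : ℕ, ∀ x : ι → F, distToCode C x = l →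
    Nat.card {y : ι → F | hammingDist x y = 1 ∧ distToCode C y = l + 1} = b l ∧
    Nat.card {y : ι → F | hammingDist x y = 1 ∧ distToCode C y + 1 = l} = c l

/-- A code is completely regular if it admits intersection numbers. -/
def IsCompletelyRegular {ι : Type*} [Fintype ι] (C : Set (ι → F)) : Prop :=
  ∃ b c : ℕ → ℕ, HasIntersectionNumbers C b c

/-- The minimum distance of a code. -/
noncomputable def minDist {ι : Type*} [Fintype ι] (C : Set (ι → F)) : ℕ :=
  sInf {d : ℕ | ∃ x ∈ C, ∃ y ∈ C, x ≠ y ∧ hammingDist x y = d}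

/-- A code is equidistant if any two distinct codewords are at the same Hamming distance. -/
def IsEquidistant {ι : Type*} [Fintype ι] (C : Set (ι → F)) : Prop :=
  ∃ d : ℕ, ∀ x ∈ C, ∀ y ∈ C, x ≠ y → hammingDist x y = d

/-- The dual of a code, with respect to the standard bilinear form. -/
def dualSet {ι : Type*} [Fintype ι] (C : Set (ι → F)) : Set (ι → F) :=
  {y | ∀ x ∈ C, ∑ i, x i * y i = 0}

/-- A code of length `n` is antipodal if it contains a word of Hamming weight `n`. -/
def IsAntipodal {ι : Type*} [Fintype ι] (C : Set (ι → F)) : Prop :=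
  ∃ v ∈ C, hammingNorm v = Fintype.card ι

/-- A monomial transformation: a coordinate permutation composed with multiplication of
each coordinate by a nonzero scalar. -/
def IsMonomialMap {ι : Type*} (φ : (ι → F) → (ι → F)) : Prop :=
  ∃ (π : Equiv.Perm ι) (s : ι → Fˣ), ∀ x i, φ x i = (s i : F) * x (π i)

/-- Two codes are monomially equivalent if one is the image of the other under a bijection of
coordinates together with multiplication of each coordinate by a nonzero scalar. -/
def MonomiallyEquivalent {ι κ : Type*} (C : Set (ι → F)) (D : Set (κ → F)) : Prop :=
  ∃ (e : ι ≃ κ) (s : ι → Fˣ),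
    (fun (x : ι → F) (j : κ) => (s (e.symm j) : F) * x (e.symm j)) '' C = D

/-- The orbit, under the action of `Aut C` on the cosets of `C`, of the coset of `v`
(realised as the union of all cosets in the orbit). -/
def cosetOrbit {ι : Type*} (C : Submodule F (ι → F)) (v : ι → F) : Set (ι → F) :=
  {w | ∃ φ : (ι → F) → (ι → F), IsMonomialMap φ ∧
    φ '' (C : Set (ι → F)) = (C : Set (ι → F)) ∧ φ v - w ∈ C}

/-- The number of orbits of the action of `Aut C` on the cosets of `C`. -/
noncomputable def numCosetOrbits {ι : Type*} (C : Submodule F (ι → F)) : ℕ :=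
  Nat.card (Set.range (cosetOrbit C))

/-- `H` is a `q`-ary Hamming code with parameter `m ≥ 2`: a perfect
`[(q^m-1)/(q-1), (q^m-1)/(q-1) - m, 3]_q` code with covering radius 1. -/
def IsHammingCode (m : ℕ) {nm : ℕ} (H : Submodule F (Fin nm → F)) : Prop :=
  2 ≤ m ∧ nm = (Fintype.card F ^ m - 1) / (Fintype.card F - 1) ∧
  Module.finrank F H = nm - m ∧ minDist (H : Set (Fin nm → F)) = 3 ∧
  coveringRadius (H : Set (Fin nm → F)) = 1

/-- The extended code: append an overall parity-check coordinate. -/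
def extendedCode {m : ℕ} (D : Set (Fin m → F)) : Set (Fin (m + 1) → F) :=
  {z | (fun i : Fin m => z i.castSucc) ∈ D ∧ ∑ i, z i = 0}

/-- Construction I(u): append `u` free coordinates to every codeword. -/
def appendCode (u : ℕ) {n : ℕ} (C : Set (Fin n → F)) : Set (Fin (n + u) → F) :=
  {z | ∃ c ∈ C, ∃ y : Fin u → F, z = Fin.append c y}

/-- Construction II(ℓ): codewords are `ℓ`-tuples of blocks whose `λ`-weighted sum lies in `C`. -/
def repeatCode {n ℓ : ℕ} (lam : Fin ℓ → Fˣ) (C : Set (Fin n → F)) :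
    Set (Fin ℓ × Fin n → F) :=
  {z | (fun j : Fin n => ∑ i : Fin ℓ, (lam i : F) * z (i, j)) ∈ C}

/-- The code `{(x₁|⋯|x_ℓ|y) : x₁+⋯+x_ℓ ∈ H, y free}` built from a code `H`. -/
def hammingRepeatCode {nm : ℕ} (ℓ u : ℕ) (H : Set (Fin nm → F)) :
    Set ((Fin ℓ × Fin nm) ⊕ Fin u → F) :=
  {z | (fun j : Fin nm => ∑ i : Fin ℓ, z (Sum.inl (i, j))) ∈ H}

set_option linter.unusedSectionVars false
set_option maxHeartbeats 1000000

open Matrix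

lemma aux_dot_ker {k m : ℕ} (w : Fin m → (Fin k → F)) (hw : LinearIndependent F w) :
    m ≤ k ∧ Nat.card {v : Fin k → F // ∀ t, ∑ i, v i * w t i = 0}
      = Fintype.card F ^ (k - m) := by
  classical
  set W : Matrix (Fin m) (Fin k) F := Matrix.of w with hW
  have hrank : W.rank = m := by
    rw [← Matrix.rank_transpose, Matrix.rank_eq_finrank_span_cols, Matrix.col_transpose]
    have h := finrank_span_eq_card hw; simp only [Fintype.card_fin] at h; exact h
  have hset : ∀ v : Fin k → F, (∀ t, ∑ i, v i * w t i = 0) ↔ v ∈ LinearMap.ker W.mulVecLin := by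
    intro v
    simp only [LinearMap.mem_ker, Matrix.mulVecLin_apply, funext_iff, Matrix.mulVec,
      dotProduct, Pi.zero_apply]
    constructor
    · intro h t; rw [← h t]; exact Finset.sum_congr rfl (fun i _ => mul_comm _ _)
    · intro h t; rw [← h t]; exact Finset.sum_congr rfl (fun i _ => mul_comm _ _)
  have hrn := LinearMap.finrank_range_add_finrank_ker (W.mulVecLin)
  rw [Module.finrank_fintype_fun_eq_card] at hrn
  have hrange : Module.finrank F (LinearMap.range W.mulVecLin) = m := hrank
  rw [hrange, Fintype.card_fin] at hrn
  have hmk : m ≤ k := le_of_add_le_left hrn.le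
  refine ⟨hmk, ?_⟩
  have hker : Module.finrank F (LinearMap.ker W.mulVecLin) = k - m := by omega
  have e : {v : Fin k → F // ∀ t, ∑ i, v i * w t i = 0} ≃ LinearMap.ker W.mulVecLin :=
    Equiv.subtypeEquiv (Equiv.refl _) (fun v => by simpa using hset v)
  rw [Nat.card_congr e, Nat.card_eq_fintype_card, Module.card_eq_pow_finrank (K := F), hker]

/-- counting nonzero solutions, Finset version -/
lemma aux_dot_ker' {k m : ℕ} (w : Fin m → (Fin k → F)) (hw : LinearIndependent F w) :
    (univ.filter fun v : Fin k → F => v ≠ 0 ∧ ∀ t, ∑ i, v i * w t i = 0).card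
      = Fintype.card F ^ (k - m) - 1 := by
  classical
  obtain ⟨-, hcard⟩ := aux_dot_ker w hw
  have h0 : (0 : Fin k → F) ∈ univ.filter fun v : Fin k → F => ∀ t, ∑ i, v i * w t i = 0 := by
    simp
  have he : (univ.filter fun v : Fin k → F => v ≠ 0 ∧ ∀ t, ∑ i, v i * w t i = 0)
      = (univ.filter fun v : Fin k → F => ∀ t, ∑ i, v i * w t i = 0).erase 0 := by
    ext v; simp [mem_erase, and_comm]
  rw [he, Finset.card_erase_of_mem h0, ← hcard, Nat.card_eq_fintype_card,
    Fintype.card_subtype]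

lemma aux_pair_indep {k : ℕ} {w x : Fin k → F} (hw : w ≠ 0) (hx : x ≠ 0)
    (hmk : Projectivization.mk F x hx ≠ Projectivization.mk F w hw) :
    LinearIndependent F ![w, x] := by
  rw [LinearIndependent.pair_iff]
  intro s t hst
  rcases eq_or_ne t 0 with rfl | ht
  · rw [zero_smul, add_zero, smul_eq_zero] at hst
    exact ⟨hst.resolve_right hw, rfl⟩
  · exfalso
    apply hmk
    rw [Projectivization.mk_eq_mk_iff']
    refine ⟨-(t⁻¹ * s), ?_⟩
    have : t • x = -(s • w) := by linear_combination (norm := module) hst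
    rw [neg_smul, mul_smul, ← smul_neg, ← this, inv_smul_smul₀ ht]


lemma aux_finite_proj {V : Type*} [AddCommGroup V] [Module F V] [Finite V] :
    Finite (Projectivization F V) :=
  Finite.of_surjective (fun x : {v : V // v ≠ 0} => Projectivization.mk F x.1 x.2)
    (fun p => ⟨⟨p.rep, p.rep_nonzero⟩, p.mk_rep⟩)

lemma aux_card_fiber {V : Type*} [AddCommGroup V] [Module F V]
    (p : Projectivization F V) :
    Nat.card {x : {v : V // v ≠ 0} // Projectivization.mk F x.1 x.2 = p} =
      Fintype.card F - 1 := by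
  have hf : ∀ a : Fˣ, ((a : F) • p.rep ≠ 0) :=
    fun a => smul_ne_zero (Units.ne_zero a) p.rep_nonzero
  have hbij : Function.Bijective (fun a : Fˣ =>
      (⟨⟨(a : F) • p.rep, hf a⟩, by
        rw [show Projectivization.mk F ((a : F) • p.rep) (hf a) = Projectivization.mk F p.rep
            p.rep_nonzero from (Projectivization.mk_eq_mk_iff F _ _ _ p.rep_nonzero).2 ⟨a, rfl⟩]
        exact p.mk_rep⟩ :
        {x : {v : V // v ≠ 0} // Projectivization.mk F x.1 x.2 = p})) := by
    constructor
    · intro a b hab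
      have : (a : F) • p.rep = (b : F) • p.rep := congrArg (fun z => (z.1 : V)) hab
      have := smul_left_injective F p.rep_nonzero this
      exact Units.ext this
    · rintro ⟨⟨v, hv⟩, hx⟩
      have h2 : Projectivization.mk F v hv = Projectivization.mk F p.rep p.rep_nonzero := by
        rw [hx, p.mk_rep]
      obtain ⟨a, ha⟩ := (Projectivization.mk_eq_mk_iff F _ _ _ p.rep_nonzero).1 h2
      exact ⟨a, by apply Subtype.ext; apply Subtype.ext; simpa [Units.smul_def] using ha⟩
  rw [← Nat.card_congr (Equiv.ofBijective _ hbij), Nat.card_eq_fintype_card,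
    Fintype.card_units]

lemma aux_card_proj (k : ℕ) :
    (Fintype.card F - 1) * Nat.card (Projectivization F (Fin k → F)) =
      Fintype.card F ^ k - 1 := by
  classical
  have : Finite (Projectivization F (Fin k → F)) := aux_finite_proj
  have := Fintype.ofFinite (Projectivization F (Fin k → F))
  have e := Equiv.sigmaFiberEquiv
    (fun x : {v : Fin k → F // v ≠ 0} => Projectivization.mk F x.1 x.2)
  have h1 : Nat.card {v : Fin k → F // v ≠ 0} = Fintype.card F ^ k - 1 := by
    rw [Nat.card_eq_fintype_card, Fintype.card_subtype_compl, Fintype.card_subtype_eq,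
      Fintype.card_fun, Fintype.card_fin]
  haveI : ∀ y : Projectivization F (Fin k → F),
      Fintype {x : {v : Fin k → F // v ≠ 0} // Projectivization.mk F x.1 x.2 = y} :=
    fun y => Fintype.ofFinite _
  calc (Fintype.card F - 1) * Nat.card (Projectivization F (Fin k → F))
      = ∑ _p : Projectivization F (Fin k → F), (Fintype.card F - 1) := by
        rw [Finset.sum_const, smul_eq_mul, Nat.card_eq_fintype_card, mul_comm, Finset.card_univ]
    _ = ∑ p : Projectivization F (Fin k → F),
        Fintype.card {x : {v : Fin k → F // v ≠ 0} // Projectivization.mk F x.1 x.2 = p} := by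
        refine Finset.sum_congr rfl (fun p _ => ?_)
        rw [← aux_card_fiber p, Nat.card_eq_fintype_card]
    _ = Fintype.card ((y : Projectivization F (Fin k → F)) ×
        {x : {v : Fin k → F // v ≠ 0} // Projectivization.mk F x.1 x.2 = y}) :=
        Fintype.card_sigma.symm
    _ = Nat.card {v : Fin k → F // v ≠ 0} := by
        rw [← Nat.card_eq_fintype_card]; exact Nat.card_congr e
    _ = Fintype.card F ^ k - 1 := h1


/-- The design argument: fibers of the projectivized column map have constant size. -/
lemma aux_fiber_const {n k : ℕ} (hk2 : 2 ≤ k) (g : Fin n → (Fin k → F)) (d : ℕ)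
    (hd : ∀ v : Fin k → F, v ≠ 0 → (univ.filter fun j => ∑ i, v i * g j i ≠ 0).card = d)
    {w w' : Fin k → F} (hw : w ≠ 0) (hw' : w' ≠ 0) :
    Nat.card {j // ∃ h : g j ≠ 0, Projectivization.mk F (g j) h = Projectivization.mk F w hw} =
    Nat.card {j // ∃ h : g j ≠ 0, Projectivization.mk F (g j) h = Projectivization.mk F w' hw'}
    := by
  classical
  set q := Fintype.card F with hq
  have hq2 : 2 ≤ q := Fintype.one_lt_card
  -- constants
  set a : ℤ := (q : ℤ) ^ (k - 1) - 1 with ha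
  set b : ℤ := (q : ℤ) ^ (k - 2) - 1 with hb
  have hk12 : k - 1 = (k - 2) + 1 := by omega
  have hab : a - b = (q : ℤ) ^ (k - 2) * ((q : ℤ) - 1) := by
    rw [ha, hb, hk12]; ring
  have habne : a - b ≠ 0 := by
    rw [hab]
    refine mul_ne_zero (pow_ne_zero _ ?_) ?_ <;>
      · intro hcon
        have : (2 : ℤ) ≤ (q : ℤ) := by exact_mod_cast hq2
        omega
  set u := (univ.filter fun j : Fin n => g j = 0).card with hu
  -- the master identity
  have master : ∀ (w : Fin k → F) (hw : w ≠ 0),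
      ((univ.filter fun j : Fin n => ∃ h : g j ≠ 0,
          Projectivization.mk F (g j) h = Projectivization.mk F w hw).card : ℤ) * (a - b)
        = a * ((n : ℤ) - d) - (n : ℤ) * b - (a - b) * u := by
    intro w hw
    set A := (univ.filter fun j : Fin n => ∃ h : g j ≠ 0,
        Projectivization.mk F (g j) h = Projectivization.mk F w hw).card with hA
    set V0 := univ.filter (fun v : Fin k → F => v ≠ 0 ∧ ∑ i, v i * w i = 0) with hV0
    -- |V0| = a
    have hV0card : (V0.card : ℤ) = a := by
      have h1 : LinearIndependent F ![w] := by
        rw [linearIndependent_unique_iff]; simpa using hw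
      have := aux_dot_ker' ![w] h1
      have hset : (univ.filter (fun v : Fin k → F => v ≠ 0 ∧ ∑ i, v i * w i = 0))
          = univ.filter fun v : Fin k → F =>
          v ≠ 0 ∧ ∀ t : Fin 1, ∑ i, v i * (![w] t) i = 0 := by
        ext v; simp [Fin.forall_fin_one]
      rw [hV0, hset, this, ha, ← hq]
      have : 1 ≤ q ^ (k - 1) := Nat.one_le_pow _ _ (lt_of_lt_of_le (by norm_num) hq2)
      push_cast [Nat.cast_sub this]; ring
    -- the double counted sum
    set S := ∑ v ∈ V0, (univ.filter fun j : Fin n => ∑ i, v i * g j i = 0).card with hS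
    -- evaluation 1
    have ev1 : (S : ℤ) = a * ((n : ℤ) - d) := by
      have hterm : ∀ v ∈ V0, ((univ.filter fun j : Fin n => ∑ i, v i * g j i = 0).card : ℤ)
          = (n : ℤ) - d := by
        intro v hv
        rw [hV0, mem_filter] at hv
        have hsplit := Finset.card_filter_add_card_filter_not
          (s := (univ : Finset (Fin n))) (p := fun j => ∑ i, v i * g j i ≠ 0)
        rw [hd v hv.2.1, Finset.card_univ, Fintype.card_fin] at hsplit
        have : (univ.filter fun j : Fin n => ¬ (∑ i, v i * g j i ≠ 0))
            = univ.filter fun j : Fin n => ∑ i, v i * g j i = 0 := by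
          ext j; simp
        rw [this] at hsplit
        have : ((d + (univ.filter fun j : Fin n => ∑ i, v i * g j i = 0).card : ℕ) : ℤ)
            = (n : ℤ) := congrArg (Nat.cast : ℕ → ℤ) hsplit
        push_cast at this
        linarith
      rw [hS]
      push_cast
      rw [Finset.sum_congr rfl hterm, Finset.sum_const, nsmul_eq_mul, hV0card]
    -- swap summation
    have ev2 : S = ∑ j : Fin n, (V0.filter fun v => ∑ i, v i * g j i = 0).card := by
      rw [hS]
      simp_rw [Finset.card_filter]
      exact Finset.sum_comm
    -- per-column evaluation
    have ev3 : ∀ j : Fin n, ((V0.filter fun v => ∑ i, v i * g j i = 0).card : ℤ)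
        = b + (a - b) * (if (g j = 0 ∨ ∃ h : g j ≠ 0,
            Projectivization.mk F (g j) h = Projectivization.mk F w hw) then 1 else 0) := by
      intro j
      by_cases h0 : g j = 0
      · rw [if_pos (Or.inl h0)]
        rw [Finset.filter_true_of_mem (fun v _ => by simp [h0])]
        rw [hV0card]; ring
      · by_cases hm : ∃ h : g j ≠ 0,
            Projectivization.mk F (g j) h = Projectivization.mk F w hw
        · rw [if_pos (Or.inr hm)]
          obtain ⟨h1, h2⟩ := hm
          rw [Projectivization.mk_eq_mk_iff'] at h2
          obtain ⟨c, hc⟩ := h2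
          have hfil : (V0.filter fun v => ∑ i, v i * g j i = 0) = V0 := by
            refine Finset.filter_true_of_mem (fun v hv => ?_)
            rw [hV0, mem_filter] at hv
            rw [← hc]
            calc ∑ i, v i * (c • w) i = c * ∑ i, v i * w i := by
                  rw [Finset.mul_sum]
                  exact Finset.sum_congr rfl (fun i _ => by simp [Pi.smul_apply]; ring)
              _ = 0 := by rw [hv.2.2, mul_zero]
          rw [hfil, hV0card]; ring
        · rw [if_neg (by tauto)]
          push_neg at hm
          have hmne : Projectivization.mk F (g j) h0 ≠ Projectivization.mk F w hw := hm h0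
          have hindep := aux_pair_indep hw h0 hmne
          have hfil : ((univ.filter (fun v : Fin k → F => v ≠ 0 ∧ ∑ i, v i * w i = 0)).filter
                fun v => ∑ i, v i * g j i = 0)
              = univ.filter fun v : Fin k → F =>
                  v ≠ 0 ∧ ∀ t : Fin 2, ∑ i, v i * (![w, g j] t) i = 0 := by
            rw [Finset.filter_filter]
            ext v
            simp [Fin.forall_fin_two, and_assoc]
          rw [hV0, hfil, aux_dot_ker' ![w, g j] hindep]
          have : 1 ≤ q ^ (k - 2) := Nat.one_le_pow _ _ (lt_of_lt_of_le (by norm_num) hq2)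
          rw [hb, ← hq]
          push_cast [Nat.cast_sub this]
          ring
    -- evaluation 2 summed
    have ev4 : (S : ℤ) = (n : ℤ) * b + (a - b) * ((u : ℤ) + A) := by
      rw [ev2]
      push_cast
      rw [Finset.sum_congr rfl (fun j _ => ev3 j)]
      rw [Finset.sum_add_distrib, Finset.sum_const, Finset.card_univ, Fintype.card_fin,
        nsmul_eq_mul, ← Finset.mul_sum]
      have hcount : (∑ j : Fin n, (if (g j = 0 ∨ ∃ h : g j ≠ 0,
          Projectivization.mk F (g j) h = Projectivization.mk F w hw) then (1:ℤ) else 0))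
          = (u : ℤ) + A := by
        rw [Finset.sum_boole]
        have hor : (univ.filter fun j : Fin n => (g j = 0 ∨ ∃ h : g j ≠ 0,
            Projectivization.mk F (g j) h = Projectivization.mk F w hw))
            = (univ.filter fun j : Fin n => g j = 0) ∪
              (univ.filter fun j : Fin n => ∃ h : g j ≠ 0,
                Projectivization.mk F (g j) h = Projectivization.mk F w hw) :=
          Finset.filter_or _ _ _
        have hdisj : Disjoint (univ.filter fun j : Fin n => g j = 0)
            (univ.filter fun j : Fin n => ∃ h : g j ≠ 0,
              Projectivization.mk F (g j) h = Projectivization.mk F w hw) := by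
          rw [Finset.disjoint_filter]
          rintro j - hj ⟨h1, -⟩
          exact h1 hj
        rw [hor, Finset.card_union_of_disjoint hdisj, hu, hA]
        push_cast; ring
      rw [hcount]
    rw [ev1] at ev4
    linear_combination -ev4
  have hw1 := master w hw
  have hw2 := master w' hw'
  have : ((univ.filter fun j : Fin n => ∃ h : g j ≠ 0,
          Projectivization.mk F (g j) h = Projectivization.mk F w hw).card : ℤ)
      = ((univ.filter fun j : Fin n => ∃ h : g j ≠ 0,
          Projectivization.mk F (g j) h = Projectivization.mk F w' hw').card : ℤ) := by
    have := hw1.trans hw2.symm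
    exact mul_right_cancel₀ habne this
  have hnat : (univ.filter fun j : Fin n => ∃ h : g j ≠ 0,
          Projectivization.mk F (g j) h = Projectivization.mk F w hw).card
      = (univ.filter fun j : Fin n => ∃ h : g j ≠ 0,
          Projectivization.mk F (g j) h = Projectivization.mk F w' hw').card := by
    exact_mod_cast this
  rw [Nat.card_eq_fintype_card, Nat.card_eq_fintype_card, Fintype.card_subtype,
    Fintype.card_subtype, hnat]


section Ham

variable {k nm : ℕ} (e2 : Fin nm ≃ Projectivization F (Fin k → F))

/-- the parity check matrix whose columns are representatives of all projective points -/
noncomputable def pcMatrix : Matrix (Fin k) (Fin nm) F :=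
  Matrix.of fun i p => (e2 p).rep i

lemma aux_col (p : Fin nm) : (fun i => pcMatrix e2 i p) = (e2 p).rep := rfl

lemma aux_col_ne (p : Fin nm) : (fun i => pcMatrix e2 i p) ≠ 0 := (e2 p).rep_nonzero

lemma aux_mk_col (p : Fin nm) :
    Projectivization.mk F _ (aux_col_ne e2 p) = e2 p :=
  (e2 p).mk_rep

/-- decomposition of a syndrome: every vector with nonzero syndrome is a unit multiple of
a column -/
lemma aux_syndrome {w : Fin k → F} (hw : w ≠ 0) :
    ∃ (p : Fin nm) (c : Fˣ), w = (c : F) • (fun i => pcMatrix e2 i p) := by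
  set p := e2.symm (Projectivization.mk F w hw) with hp
  have hmk : Projectivization.mk F w hw = Projectivization.mk F _ (aux_col_ne e2 p) := by
    rw [aux_mk_col, hp, Equiv.apply_symm_apply]
  obtain ⟨c, hc⟩ := (Projectivization.mk_eq_mk_iff F _ _ hw (aux_col_ne e2 p)).1 hmk
  exact ⟨p, c, hc.symm⟩

lemma aux_span_top : Submodule.span F (Set.range (pcMatrix e2)ᵀ) = ⊤ := by
  rw [Submodule.eq_top_iff']
  intro w
  rcases eq_or_ne w 0 with rfl | hw
  · exact Submodule.zero_mem _
  · obtain ⟨p, c, hc⟩ := aux_syndrome e2 hw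
    rw [hc]
    exact Submodule.smul_mem _ _ (Submodule.subset_span ⟨p, rfl⟩)

lemma aux_finrank (hkn : k ≤ nm) :
    Module.finrank F (LinearMap.ker (pcMatrix e2).mulVecLin) = nm - k := by
  have hrn := LinearMap.finrank_range_add_finrank_ker ((pcMatrix e2).mulVecLin)
  rw [Module.finrank_fintype_fun_eq_card, Fintype.card_fin] at hrn
  have hr : LinearMap.range (pcMatrix e2).mulVecLin = ⊤ := by
    rw [Matrix.range_mulVecLin]; exact aux_span_top e2
  rw [hr, finrank_top, Module.finrank_fintype_fun_eq_card, Fintype.card_fin] at hrn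
  omega

/-- any nonzero codeword has weight ≥ 3 -/
lemma aux_wt_ge {x : Fin nm → F} (hx : x ≠ 0) (hker : (pcMatrix e2).mulVec x = 0) :
    3 ≤ hammingNorm x := by
  by_contra hlt
  push_neg at hlt
  -- support has ≤ 2 elements
  have hsupp : (univ.filter fun p => x p ≠ 0).card ≤ 2 := by
    unfold hammingNorm at hlt; omega
  have hsum : ∀ i, ∑ p ∈ univ.filter (fun p => x p ≠ 0), pcMatrix e2 i p * x p = 0 := by
    intro i
    rw [Finset.sum_filter_of_ne (fun p _ hne => by
      intro hxp; exact hne (by rw [hxp, mul_zero]))]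
    exact congrFun hker i
  interval_cases h : (univ.filter fun p => x p ≠ 0).card
  · -- empty support: x = 0
    apply hx
    funext p
    show x p = 0
    by_contra hp
    have : p ∈ univ.filter fun p => x p ≠ 0 := by simp [hp]
    rw [Finset.card_eq_zero.1 h] at this
    simp at this
  · -- one point
    obtain ⟨p0, hp0⟩ := Finset.card_eq_one.1 h
    have hp0mem : x p0 ≠ 0 := by
      have : p0 ∈ univ.filter fun p => x p ≠ 0 := hp0 ▸ Finset.mem_singleton_self p0
      simpa using this
    apply aux_col_ne e2 p0
    funext i
    have := hsum i
    rw [hp0, Finset.sum_singleton] at this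
    exact (mul_eq_zero.1 this).resolve_right hp0mem
  · -- two points
    obtain ⟨p0, p1, hne, hp01⟩ := Finset.card_eq_two.1 h
    have hx0 : x p0 ≠ 0 := by
      have : p0 ∈ univ.filter fun p => x p ≠ 0 := hp01 ▸ by simp
      simpa using this
    have hx1 : x p1 ≠ 0 := by
      have : p1 ∈ univ.filter fun p => x p ≠ 0 := hp01 ▸ by simp
      simpa using this
    have hmkne : Projectivization.mk F _ (aux_col_ne e2 p1)
        ≠ Projectivization.mk F _ (aux_col_ne e2 p0) := by
      rw [aux_mk_col, aux_mk_col]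
      exact fun hc => hne (e2.injective hc).symm
    have hindep := aux_pair_indep (aux_col_ne e2 p0) (aux_col_ne e2 p1) hmkne
    rw [LinearIndependent.pair_iff] at hindep
    have hrel : x p0 • (fun i => pcMatrix e2 i p0) + x p1 • (fun i => pcMatrix e2 i p1)
        = (0 : Fin k → F) := by
      funext i
      have := hsum i
      rw [hp01, Finset.sum_insert (by simpa using hne), Finset.sum_singleton] at this
      simpa [mul_comm] using this
    exact hx0 (hindep _ _ hrel).1
end Ham

section Ham2
variable {k nm : ℕ} (e2 : Fin nm ≃ Projectivization F (Fin k → F))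

lemma aux_exists_wt3 (hk2 : 2 ≤ k) :
    ∃ x : Fin nm → F, (pcMatrix e2).mulVec x = 0 ∧ hammingNorm x = 3 := by
  classical
  have i0 : Fin k := ⟨0, by omega⟩
  set j0 : Fin k := ⟨0, by omega⟩ with hj0
  set j1 : Fin k := ⟨1, by omega⟩ with hj1
  have h01 : j0 ≠ j1 := by
    intro hc
    have : (0 : ℕ) = 1 := congrArg Fin.val hc
    omega
  set w1 : Fin k → F := Pi.single j0 1 with hw1def
  set w2 : Fin k → F := Pi.single j1 1 with hw2def
  set w3 : Fin k → F := w1 + w2 with hw3def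
  have hval1 : ∀ j, w1 j = if j = j0 then 1 else 0 := fun j => Pi.single_apply _ _ _
  have hval2 : ∀ j, w2 j = if j = j1 then 1 else 0 := fun j => Pi.single_apply _ _ _
  have hw1 : w1 ≠ 0 := fun hc => by simpa [hval1] using congrFun hc j0
  have hw2 : w2 ≠ 0 := fun hc => by simpa [hval2] using congrFun hc j1
  have hw3 : w3 ≠ 0 := fun hc => by
    have := congrFun hc j0
    simp [hw3def, hval1, hval2, h01] at this
  have hne12 : Projectivization.mk F w1 hw1 ≠ Projectivization.mk F w2 hw2 := by
    intro hc
    obtain ⟨a, ha⟩ := (Projectivization.mk_eq_mk_iff' F _ _ hw1 hw2).1 hc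
    have := congrFun ha j0
    simp [hval1, hval2, h01] at this
  have hne13 : Projectivization.mk F w1 hw1 ≠ Projectivization.mk F w3 hw3 := by
    intro hc
    obtain ⟨a, ha⟩ := (Projectivization.mk_eq_mk_iff' F _ _ hw1 hw3).1 hc
    have h0 := congrFun ha j0
    have h1 := congrFun ha j1
    simp [hw3def, hval1, hval2, h01, Ne.symm h01] at h0 h1
    simp [h0] at h1
  have hne23 : Projectivization.mk F w2 hw2 ≠ Projectivization.mk F w3 hw3 := by
    intro hc
    obtain ⟨a, ha⟩ := (Projectivization.mk_eq_mk_iff' F _ _ hw2 hw3).1 hc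
    have h0 := congrFun ha j0
    have h1 := congrFun ha j1
    simp [hw3def, hval1, hval2, h01, Ne.symm h01] at h0 h1
    rw [h0] at h1
    exact zero_ne_one h1
  obtain ⟨p1, hp1⟩ : ∃ p, e2 p = Projectivization.mk F w1 hw1 :=
    ⟨e2.symm _, e2.apply_symm_apply _⟩
  obtain ⟨p2, hp2⟩ : ∃ p, e2 p = Projectivization.mk F w2 hw2 :=
    ⟨e2.symm _, e2.apply_symm_apply _⟩
  obtain ⟨p3, hp3⟩ : ∃ p, e2 p = Projectivization.mk F w3 hw3 :=
    ⟨e2.symm _, e2.apply_symm_apply _⟩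
  have hp12 : p1 ≠ p2 := fun hc => hne12 (by rw [← hp1, ← hp2, hc])
  have hp13 : p1 ≠ p3 := fun hc => hne13 (by rw [← hp1, ← hp3, hc])
  have hp23 : p2 ≠ p3 := fun hc => hne23 (by rw [← hp2, ← hp3, hc])
  obtain ⟨c1, hc1⟩ : ∃ c : Fˣ, (fun i => pcMatrix e2 i p1) = (c : F) • w1 := by
    obtain ⟨c, hc⟩ := (Projectivization.mk_eq_mk_iff F _ _ (aux_col_ne e2 p1) hw1).1
      (by rw [aux_mk_col, hp1])
    exact ⟨c, hc.symm⟩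
  obtain ⟨c2, hc2⟩ : ∃ c : Fˣ, (fun i => pcMatrix e2 i p2) = (c : F) • w2 := by
    obtain ⟨c, hc⟩ := (Projectivization.mk_eq_mk_iff F _ _ (aux_col_ne e2 p2) hw2).1
      (by rw [aux_mk_col, hp2])
    exact ⟨c, hc.symm⟩
  obtain ⟨c3, hc3⟩ : ∃ c : Fˣ, (fun i => pcMatrix e2 i p3) = (c : F) • w3 := by
    obtain ⟨c, hc⟩ := (Projectivization.mk_eq_mk_iff F _ _ (aux_col_ne e2 p3) hw3).1
      (by rw [aux_mk_col, hp3])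
    exact ⟨c, hc.symm⟩
  refine ⟨Pi.single p1 ((c1 : F)⁻¹) + Pi.single p2 ((c2 : F)⁻¹)
    + Pi.single p3 (-(c3 : F)⁻¹), ?_, ?_⟩
  · rw [Matrix.mulVec_add, Matrix.mulVec_add, Matrix.mulVec_single, Matrix.mulVec_single,
      Matrix.mulVec_single]
    funext i
    have e1 := congrFun hc1 i
    have e2' := congrFun hc2 i
    have e3 := congrFun hc3 i
    simp only [Pi.smul_apply, smul_eq_mul] at e1 e2' e3
    simp only [Pi.add_apply, Pi.zero_apply, Pi.smul_apply, Matrix.col, Matrix.transpose_apply,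
      op_smul_eq_mul]
    rw [e1, e2', e3, hw3def]
    have hc1ne : (c1 : F) ≠ 0 := Units.ne_zero c1
    have hc2ne : (c2 : F) ≠ 0 := Units.ne_zero c2
    have hc3ne : (c3 : F) ≠ 0 := Units.ne_zero c3
    simp only [Pi.add_apply]
    field_simp
    ring
  · unfold hammingNorm
    have hsupp : (univ.filter fun p => ((Pi.single p1 ((c1 : F)⁻¹) + Pi.single p2 ((c2 : F)⁻¹)
        + Pi.single p3 (-(c3 : F)⁻¹) : Fin nm → F)) p ≠ 0) = {p1, p2, p3} := by
      ext p
      simp only [mem_filter, mem_univ, true_and, mem_insert, mem_singleton, Pi.add_apply,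
        Pi.single_apply]
      rcases eq_or_ne p p1 with rfl | h1
      · simp [Ne.symm hp12, Ne.symm hp13, hp12, hp13]
      · rcases eq_or_ne p p2 with rfl | h2
        · simp [Ne.symm hp23, hp23, h1]
        · rcases eq_or_ne p p3 with rfl | h3
          · simp [h1, h2]
          · simp [h1, h2, h3]
    rw [hsupp]
    rw [Finset.card_insert_of_notMem (by simp [hp12, hp13]),
      Finset.card_insert_of_notMem (by simp [hp23]), Finset.card_singleton]
end Ham2

section Ham3
variable {k nm : ℕ} (e2 : Fin nm ≃ Projectivization F (Fin k → F))

lemma aux_rn : k + Module.finrank F (LinearMap.ker (pcMatrix e2).mulVecLin) = nm := by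
  have hrn := LinearMap.finrank_range_add_finrank_ker ((pcMatrix e2).mulVecLin)
  rw [Module.finrank_fintype_fun_eq_card, Fintype.card_fin] at hrn
  have hr : LinearMap.range (pcMatrix e2).mulVecLin = ⊤ := by
    rw [Matrix.range_mulVecLin]; exact aux_span_top e2
  rw [hr, finrank_top, Module.finrank_fintype_fun_eq_card, Fintype.card_fin] at hrn
  exact hrn

lemma aux_hamming (hk2 : 2 ≤ k)
    (hnm : nm = (Fintype.card F ^ k - 1) / (Fintype.card F - 1)) :
    IsHammingCode k (LinearMap.ker (pcMatrix e2).mulVecLin) := by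
  classical
  have hrn := aux_rn e2
  refine ⟨hk2, hnm, by omega, ?_, ?_⟩
  · -- min distance 3
    obtain ⟨x3, hx3ker, hx3norm⟩ := aux_exists_wt3 e2 hk2
    have hx3mem : x3 ∈ LinearMap.ker (pcMatrix e2).mulVecLin := by
      rw [LinearMap.mem_ker, Matrix.mulVecLin_apply, hx3ker]
    have hx3ne : x3 ≠ 0 := by
      intro hc
      rw [hc] at hx3norm
      simp [hammingNorm] at hx3norm
    have h3S : 3 ∈ {d : ℕ | ∃ x ∈ (LinearMap.ker (pcMatrix e2).mulVecLin : Set (Fin nm → F)),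
        ∃ y ∈ (LinearMap.ker (pcMatrix e2).mulVecLin : Set (Fin nm → F)),
        x ≠ y ∧ hammingDist x y = d} :=
      ⟨x3, hx3mem, 0, Submodule.zero_mem _, hx3ne, by rw [hammingDist_zero_right, hx3norm]⟩
    refine le_antisymm (Nat.sInf_le h3S) (le_csInf ⟨3, h3S⟩ ?_)
    rintro d ⟨x, hx, y, hy, hxy, rfl⟩
    rw [hammingDist_comm, hammingDist_eq_hammingNorm, neg_add_eq_sub]
    refine aux_wt_ge e2 (sub_ne_zero.2 hxy) ?_
    have := Submodule.sub_mem _ hx hy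
    rwa [LinearMap.mem_ker, Matrix.mulVecLin_apply] at this
  · -- covering radius 1
    set C := (LinearMap.ker (pcMatrix e2).mulVecLin : Set (Fin nm → F)) with hC
    have hle : ∀ x : Fin nm → F, distToCode C x ≤ 1 := by
      intro x
      rcases eq_or_ne ((pcMatrix e2).mulVec x) 0 with h0 | hne
      · have hx' : x ∈ C := by
          simp only [hC, SetLike.mem_coe, LinearMap.mem_ker, Matrix.mulVecLin_apply]
          exact h0
        have hmem : (0:ℕ) ∈ {d : ℕ | ∃ c ∈ C, hammingDist x c = d} :=
          ⟨x, hx', hammingDist_self x⟩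
        exact le_trans (Nat.sInf_le hmem) (by norm_num)
      · obtain ⟨p, c, hc⟩ := aux_syndrome e2 hne
        refine Nat.sInf_le ⟨x - (c : F) • (Pi.single p 1 : Fin nm → F), ?_, ?_⟩
        · simp only [hC, SetLike.mem_coe, LinearMap.mem_ker, Matrix.mulVecLin_apply]
          rw [Matrix.mulVec_sub, Matrix.mulVec_smul, Matrix.mulVec_single, hc]
          funext i
          simp
        · rw [hammingDist_comm, hammingDist_eq_hammingNorm, neg_add_eq_sub, sub_sub_cancel]
          unfold hammingNorm
          have : (univ.filter fun j => (((c : F) • (Pi.single p 1 : Fin nm → F)) : Fin nm → F) j ≠ 0) = {p} := by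
            ext j
            simp only [mem_filter, mem_univ, true_and, mem_singleton, Pi.smul_apply,
              Pi.single_apply, smul_eq_mul]
            rcases eq_or_ne j p with rfl | hj
            · simp [Units.ne_zero c]
            · simp [hj]
          rw [this, Finset.card_singleton]
    have hnm1 : 0 < nm := by omega
    set p0 : Fin nm := ⟨0, hnm1⟩ with hp0
    set x0 : Fin nm → F := Pi.single p0 1 with hx0
    have hx0notin : x0 ∉ C := by
      simp only [hC, SetLike.mem_coe, LinearMap.mem_ker, Matrix.mulVecLin_apply, hx0,
        Matrix.mulVec_single]
      intro hc
      apply aux_col_ne e2 p0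
      funext i
      simpa using congrFun hc i
    have hCne : ∀ x : Fin nm → F, {d : ℕ | ∃ c ∈ C, hammingDist x c = d}.Nonempty :=
      fun x => ⟨hammingDist x 0, 0, Submodule.zero_mem _, rfl⟩
    have hx0dist : distToCode C x0 = 1 := by
      have h1 := hle x0
      have h0 : distToCode C x0 ≠ 0 := by
        intro hc
        have := Nat.sInf_mem (hCne x0)
        rw [← distToCode, hc] at this
        obtain ⟨c, hcC, hdist⟩ := this
        exact hx0notin (hammingDist_eq_zero.1 hdist ▸ hcC)
      omega
    have h1mem : 1 ∈ {d : ℕ | ∃ x : Fin nm → F, distToCode C x = d} := ⟨x0, hx0dist⟩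
    have hbdd : ∀ d ∈ {d : ℕ | ∃ x : Fin nm → F, distToCode C x = d}, d ≤ 1 := by
      rintro d ⟨x, rfl⟩; exact hle x
    exact le_antisymm (csSup_le ⟨1, h1mem⟩ hbdd) (le_csSup ⟨1, hbdd⟩ h1mem)

lemma aux_ker_bot (hnm1 : nm = 1) :
    LinearMap.ker (pcMatrix e2).mulVecLin = ⊥ := by
  classical
  haveI : Subsingleton (Fin nm) := by
    subst hnm1; infer_instance
  rw [Submodule.eq_bot_iff]
  intro x hx
  rw [LinearMap.mem_ker, Matrix.mulVecLin_apply] at hx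
  funext p
  show x p = 0
  obtain ⟨i, hi⟩ : ∃ i, pcMatrix e2 i p ≠ 0 := by
    by_contra hcon
    push_neg at hcon
    exact aux_col_ne e2 p (funext hcon)
  have := congrFun hx i
  rw [Matrix.mulVec, Pi.zero_apply] at this
  have hsum : (pcMatrix e2 i) ⬝ᵥ x = pcMatrix e2 i p * x p := by
    rw [dotProduct]
    rw [show (univ : Finset (Fin nm)) = {p} from (Finset.eq_univ_of_card {p}
      (by rw [Finset.card_singleton, Fintype.card_fin, hnm1])).symm]
    rw [Finset.sum_singleton]
  rw [hsum] at this
  exact (mul_eq_zero.1 this).resolve_left hi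

lemma aux_proj_subsingleton : ∀ p p' : Projectivization F (Fin 1 → F), p = p' := by
  intro p p'
  rw [← p.mk_rep, ← p'.mk_rep, Projectivization.mk_eq_mk_iff']
  have h0 : p'.rep 0 ≠ 0 := by
    intro hc
    apply p'.rep_nonzero
    funext j
    rw [Subsingleton.elim j 0, hc, Pi.zero_apply]
  refine ⟨p.rep 0 * (p'.rep 0)⁻¹, ?_⟩
  funext j
  rw [Subsingleton.elim j 0]
  simp [h0]
end Ham3

lemma aux_finite_proj' {k : ℕ} : Finite (Projectivization F (Fin k → F)) :=
  Finite.of_surjective (fun x : {v : Fin k → F // v ≠ 0} => Projectivization.mk F x.1 x.2)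
    (fun p => ⟨⟨p.rep, p.rep_nonzero⟩, p.mk_rep⟩)

lemma aux_fiber_const' {n k : ℕ} (hk : 1 ≤ k) (g : Fin n → (Fin k → F)) (d : ℕ)
    (hd : ∀ v : Fin k → F, v ≠ 0 → (univ.filter fun j => ∑ i, v i * g j i ≠ 0).card = d)
    (p p' : Projectivization F (Fin k → F)) :
    Nat.card {j // ∃ h : g j ≠ 0, Projectivization.mk F (g j) h = p} =
    Nat.card {j // ∃ h : g j ≠ 0, Projectivization.mk F (g j) h = p'} := by
  rcases eq_or_lt_of_le hk with hk1 | hk2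
  · have hpp : p = p' := by
      subst hk1
      exact aux_proj_subsingleton p p'
    rw [hpp]
  · have h := aux_fiber_const hk2 g d hd p.rep_nonzero p'.rep_nonzero
    rw [p.mk_rep, p'.mk_rep] at h
    exact h



/-- every equidistant linear code of dimension `k ≥ 1` and length `n` satisfies
`n = ℓ·(qᵏ-1)/(q-1) + u` and is monomially equivalent to the code generated by the matrix
`[H_k | ⋯ | H_k | 0]` (ℓ copies of a parity check matrix of the Hamming code, `u` zero columns). -/
theorem equidistant_classification
    {F : Type*} [Field F] [Fintype F] [DecidableEq F] {n k : ℕ} (hk : 1 ≤ k)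
    (E : Submodule F (Fin n → F))
    (hdim : Module.finrank F E = k)
    (heq : IsEquidistant (E : Set (Fin n → F))) :
    ∃ ℓ : ℕ, 1 ≤ ℓ ∧ ∃ u : ℕ,
      n = ℓ * ((Fintype.card F ^ k - 1) / (Fintype.card F - 1)) + u ∧
      ∃ H : Submodule F (Fin ((Fintype.card F ^ k - 1) / (Fintype.card F - 1)) → F),
        ((k = 1 ∧ H = ⊥) ∨ IsHammingCode k H) ∧
        ∃ M : Matrix (Fin k) (Fin ((Fintype.card F ^ k - 1) / (Fintype.card F - 1))) F,
          (∀ x, x ∈ H ↔ M.mulVec x = 0) ∧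
          MonomiallyEquivalent (E : Set (Fin n → F))
            (Set.range fun v : Fin k → F =>
              Sum.elim
                (fun p : Fin ℓ × Fin ((Fintype.card F ^ k - 1) / (Fintype.card F - 1)) =>
                  Matrix.vecMul v M p.2)
                (fun _ : Fin u => (0 : F))) := by
  classical
  obtain ⟨d, hd0⟩ := heq
  have hq2 : 2 ≤ Fintype.card F := Fintype.one_lt_card
  -- basis and generator columns
  let b : Module.Basis (Fin k) F E := Module.finBasisOfFinrankEq F E hdim
  set g : Fin n → Fin k → F := fun j i => (b i : Fin n → F) j with hg
  have hLrep : ∀ v : Fin k → F,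
      ((∑ i, v i • b i : E) : Fin n → F) = fun j => ∑ i, v i * g j i := by
    intro v
    funext j
    rw [hg]
    push_cast
    rw [Finset.sum_apply]
    simp [Pi.smul_apply]
  have hLmem : ∀ v : Fin k → F, (fun j => ∑ i, v i * g j i) ∈ E := by
    intro v
    rw [← hLrep v]
    exact (∑ i, v i • b i : E).2
  have hLne : ∀ v : Fin k → F, v ≠ 0 → (fun j => ∑ i, v i * g j i) ≠ (0 : Fin n → F) := by
    intro v hv hc
    apply hv
    have hs : (∑ i, v i • b i : E) = 0 := by
      apply Subtype.ext
      rw [hLrep v]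
      exact hc
    have := Fintype.linearIndependent_iff.1 b.linearIndependent v hs
    funext i
    exact this i
  have hLsurj : ∀ x ∈ E, ∃ v : Fin k → F, (fun j => ∑ i, v i * g j i) = x := by
    intro x hx
    refine ⟨fun i => b.repr ⟨x, hx⟩ i, ?_⟩
    rw [← hLrep]
    rw [Module.Basis.sum_repr b ⟨x, hx⟩]
  have hwt : ∀ v : Fin k → F, v ≠ 0 →
      (univ.filter fun j => ∑ i, v i * g j i ≠ 0).card = d := by
    intro v hv
    have := hd0 _ (hLmem v) 0 (Submodule.zero_mem E) (hLne v hv)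
    rw [hammingDist_zero_right] at this
    exact this
  -- projectivization
  haveI : Finite (Projectivization F (Fin k → F)) := aux_finite_proj'
  have hfibconst : ∀ p p' : Projectivization F (Fin k → F),
      Nat.card {j // ∃ h : g j ≠ 0, Projectivization.mk F (g j) h = p} =
      Nat.card {j // ∃ h : g j ≠ 0, Projectivization.mk F (g j) h = p'} :=
    fun p p' => aux_fiber_const' hk g d hwt p p'
  -- a nonzero vector
  set w0 : Fin k → F := Pi.single ⟨0, hk⟩ 1 with hw0def
  have hw0 : w0 ≠ 0 := by
    intro hc
    have := congrFun hc ⟨0, hk⟩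
    rw [hw0def] at this
    simp at this
  set p0 := Projectivization.mk F w0 hw0 with hp0
  set ℓ := Nat.card {j // ∃ h : g j ≠ 0, Projectivization.mk F (g j) h = p0} with hℓ
  have hfib : ∀ p : Projectivization F (Fin k → F),
      Nat.card {j // ∃ h : g j ≠ 0, Projectivization.mk F (g j) h = p} = ℓ :=
    fun p => hfibconst p p0
  -- ℓ ≥ 1
  have hℓ1 : 1 ≤ ℓ := by
    obtain ⟨j, hj⟩ : ∃ j, (∑ i, w0 i * g j i) ≠ 0 := by
      by_contra hcon
      push_neg at hcon
      exact hLne w0 hw0 (funext hcon)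
    have hgj : g j ≠ 0 := by
      intro hc
      apply hj
      rw [hc]
      simp
    have : 0 < Nat.card {j' // ∃ h : g j' ≠ 0,
        Projectivization.mk F (g j') h = Projectivization.mk F (g j) hgj} := by
      haveI : Nonempty {j' // ∃ h : g j' ≠ 0,
          Projectivization.mk F (g j') h = Projectivization.mk F (g j) hgj} :=
        ⟨⟨j, hgj, rfl⟩⟩
      exact Nat.card_pos
    rw [hfib] at this
    omega
  -- cardinality of the projective space
  have hcardP : Nat.card (Projectivization F (Fin k → F))
      = (Fintype.card F ^ k - 1) / (Fintype.card F - 1) := by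
    rw [← aux_card_proj k, Nat.mul_div_cancel_left _ (by omega : 0 < Fintype.card F - 1)]
  set nm := (Fintype.card F ^ k - 1) / (Fintype.card F - 1) with hnmdef
  have e2 : Fin nm ≃ Projectivization F (Fin k → F) :=
    (Finite.equivFinOfCardEq hcardP).symm
  -- the fibration machinery
  set ψ : {j : Fin n // g j ≠ 0} → Projectivization F (Fin k → F) :=
    fun x => Projectivization.mk F (g x.1) x.2 with hψ
  have hfibψ : ∀ p, Nat.card {x : {j : Fin n // g j ≠ 0} // ψ x = p} = ℓ := by
    intro p
    rw [Nat.card_congr (Equiv.subtypeSubtypeEquivSubtypeExists _ _)]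
    exact hfib p
  have c1 : ∀ p, {x : {j : Fin n // g j ≠ 0} // ψ x = p} ≃ Fin ℓ :=
    fun p => Finite.equivFinOfCardEq (hfibψ p)
  set u := Nat.card {j : Fin n // ¬ g j ≠ 0} with hu
  have eU : {j : Fin n // ¬ g j ≠ 0} ≃ Fin u := Finite.equivFinOfCardEq rfl
  set big : Fin ℓ × Fin nm ≃ {j : Fin n // g j ≠ 0} :=
    ((Equiv.prodComm _ _).trans ((Equiv.sigmaEquivProd (Fin nm) (Fin ℓ)).symm.trans
      ((Equiv.sigmaCongrLeft e2).trans ((Equiv.sigmaCongrRight (fun p => (c1 p).symm)).trans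
        (Equiv.sigmaFiberEquiv ψ))))) with hbigdef
  have hbig : ∀ (i : Fin ℓ) (p : Fin nm), ψ (big (i, p)) = e2 p := by
    intro i p
    exact ((c1 (e2 p)).symm i).2
  set e' : (Fin ℓ × Fin nm) ⊕ Fin u ≃ Fin n :=
    (Equiv.sumCongr big eU.symm).trans (Equiv.sumCompl _) with he'def
  -- length equation
  have hlen : n = ℓ * nm + u := by
    have h1 := Nat.card_congr e'
    simp only [Nat.card_sum, Nat.card_prod, Nat.card_eq_fintype_card, Fintype.card_sum, Fintype.card_prod, Fintype.card_fin] at h1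
    exact h1.symm
  refine ⟨ℓ, hℓ1, u, hlen, LinearMap.ker (pcMatrix e2).mulVecLin, ?_, pcMatrix e2, ?_, ?_⟩
  · -- Hamming or bot
    rcases eq_or_lt_of_le hk with hk1 | hk2
    · left
      refine ⟨hk1.symm, aux_ker_bot e2 ?_⟩
      rw [hnmdef, ← hk1, pow_one]
      exact Nat.div_self (by omega)
    · right
      exact aux_hamming e2 hk2 rfl
  · -- membership iff
    intro x
    rw [LinearMap.mem_ker, Matrix.mulVecLin_apply]
  · -- monomial equivalence
    -- scalar choice
    have hsel : ∀ (j : Fin n) (h : g j ≠ 0), ∃ a : Fˣ, (a : F) • g j = (ψ ⟨j, h⟩).rep := by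
      intro j h
      have : Projectivization.mk F (ψ ⟨j, h⟩).rep (ψ ⟨j, h⟩).rep_nonzero
          = Projectivization.mk F (g j) h := (ψ ⟨j, h⟩).mk_rep
      obtain ⟨a, ha⟩ := (Projectivization.mk_eq_mk_iff F _ _ _ h).1 this
      exact ⟨a, ha⟩
    set s : Fin n → Fˣ := fun j => if h : g j ≠ 0 then (hsel j h).choose else 1 with hs
    refine ⟨e'.symm, s, ?_⟩
    have he'symm : e'.symm.symm = e' := Equiv.symm_symm e'
    rw [he'symm]
    -- main image computation
    have hT : ∀ v : Fin k → F,
        (fun κj => (s (e' κj) : F) * (fun j => ∑ i, v i * g j i) (e' κj))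
        = Sum.elim (fun p : Fin ℓ × Fin nm => Matrix.vecMul v (pcMatrix e2) p.2)
            (fun _ : Fin u => (0 : F)) := by
      intro v
      funext κj
      rcases κj with ⟨i, p⟩ | t
      · -- inl case
        have hj' : e' (Sum.inl (i, p)) = (big (i, p)).1 := by
          rw [he'def]
          simp [Equiv.sumCompl_apply_inl]
        rw [hj']
        set j := (big (i, p)).1 with hj
        have hgj : g j ≠ 0 := (big (i, p)).2
        have hsj : (s j : F) • g j = (e2 p).rep := by
          simp only [hs]
          rw [dif_pos hgj]
          have := (hsel j hgj).choose_spec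
          rw [this]
          have hψj : ψ ⟨j, hgj⟩ = e2 p := by
            rw [← hbig i p]
          rw [hψj]
        show (s j : F) * (∑ i', v i' * g j i') = Matrix.vecMul v (pcMatrix e2) p
        rw [Matrix.vecMul, dotProduct]
        rw [Finset.mul_sum]
        refine Finset.sum_congr rfl (fun i' _ => ?_)
        have := congrFun hsj i'
        rw [Pi.smul_apply, smul_eq_mul] at this
        show (s j : F) * (v i' * g j i') = v i' * pcMatrix e2 i' p
        rw [show pcMatrix e2 i' p = (e2 p).rep i' from rfl, ← this]
        ring
      · -- inr case
        have hj' : e' (Sum.inr t) = (eU.symm t).1 := by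
          rw [he'def]
          simp
        rw [hj']
        have hgj : g ((eU.symm t).1) = 0 := not_not.1 (eU.symm t).2
        show (s _ : F) * (∑ i', v i' * g ((eU.symm t).1) i') = 0
        rw [hgj]
        simp
    ext y
    simp only [Set.mem_image, Set.mem_range, SetLike.mem_coe]
    constructor
    · rintro ⟨x, hx, rfl⟩
      obtain ⟨v, hv⟩ := hLsurj x hx
      have hTv := hT v
      rw [hv] at hTv
      exact ⟨v, hTv.symm⟩
    · rintro ⟨v, rfl⟩
      exact ⟨(fun j => ∑ i, v i * g j i), hLmem v, hT v⟩
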